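/- Consider points z₁,...,z_d with strictly increasing real parts and cuts as in a chopped vertical strip realizing exactly k visible pairs among z₁,...,z_{d-1} (treating z₁,...,z_{d-1} with their cuts as a chopped strip on d−1 nodes). Then one can add a cut at z_{d-1} and place a new node z_d to the right of z_{d-1} so that the resulting chopped strip on d nodes has exactly k+1 visible pairs: the only new visible pair is (d−1, d). -/

import Mathlib

open Complex Set

/-- The vertical ray (cut) at point `p`, going up if `b = true`, down otherwise. -/
def cutRay (p : ℂ) (b : Bool) : Set ℂ :=
  {w : ℂ | ∃ t : ℝ, 0 < t ∧ w = p + Complex.I * (if b then (t : ℂ) else -(t : ℂ))}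

/-- The union of the cuts of a chopped vertical strip: one vertical ray at each
interior node `z j`, `j = 2, ..., d-1` (in `Fin d` indexing: `0 < j < d - 1`). -/
def cutSet (d : ℕ) (z : Fin d → ℂ) (dir : Fin d → Bool) : Set ℂ :=
  ⋃ j ∈ {j : Fin d | (j : ℕ) ≠ 0 ∧ (j : ℕ) ≠ d - 1}, cutRay (z j) (dir j)

/-- The pair `(i, j)` is visible if the open segment from `z i` to `z j`
meets none of the cuts. -/
def Visible (d : ℕ) (z : Fin d → ℂ) (dir : Fin d → Bool) (i j : Fin d) : Prop :=
  openSegment ℝ (z i) (z j) ∩ cutSet d z dir = ∅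

/-- The number of visible pairs `(i, j)`, `i < j`, of a chopped vertical strip. -/
noncomputable def visibleCount (d : ℕ) (z : Fin d → ℂ) (dir : Fin d → Bool) : ℕ :=
  Nat.card {p : Fin d × Fin d // p.1 < p.2 ∧ Visible d z dir p.1 p.2}

lemma aux_cutRay_re {p q : ℂ} {b : Bool} (h : q ∈ cutRay p b) : q.re = p.re := by
  obtain ⟨t, ht, rfl⟩ := h
  cases b <;> simp

lemma aux_mem_cutSet_iff {d} {z : Fin d → ℂ} {dir} {p : ℂ} :
    p ∈ cutSet d z dir ↔ ∃ j : Fin d, (j:ℕ) ≠ 0 ∧ (j:ℕ) ≠ d - 1 ∧ p ∈ cutRay (z j) (dir j) := by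
  simp only [cutSet, mem_iUnion, mem_setOf_eq, exists_prop]
  tauto

lemma aux_visible_iff {d} {z : Fin d → ℂ} {dir} {i j : Fin d} :
    Visible d z dir i j ↔ ∀ p ∈ openSegment ℝ (z i) (z j), p ∉ cutSet d z dir := by
  rw [Visible, Set.eq_empty_iff_forall_notMem]
  simp [not_and]

lemma aux_seg_coord {u v p : ℂ} (h : p ∈ openSegment ℝ u v) :
    ∃ t : ℝ, 0 < t ∧ t < 1 ∧ p.re = (1-t)*u.re + t*v.re ∧ p.im = (1-t)*u.im + t*v.im := by
  obtain ⟨a, b, ha, hb, hab, rfl⟩ := h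
  have haeq : a = 1 - b := by linarith
  refine ⟨b, hb, by linarith, ?_, ?_⟩ <;>
    simp [Complex.real_smul, Complex.add_re, Complex.add_im, Complex.mul_re, Complex.mul_im,
      haeq]

lemma aux_mem_seg {u v : ℂ} {t : ℝ} (h0 : 0 < t) (h1 : t < 1) :
    (1-t) • u + t • v ∈ openSegment ℝ u v :=
  ⟨1-t, t, by linarith, h0, by ring, rfl⟩

lemma aux_snoc_lt {d : ℕ} (z : Fin d → ℂ) (w : ℂ) (i : Fin (d+1)) (h : i.val < d) :
    (Fin.snoc z w : Fin (d+1) → ℂ) i = z ⟨i.val, h⟩ := by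
  simp [Fin.snoc, h]; rfl

lemma aux_snoc_lt' {d : ℕ} (dir : Fin d → Bool) (b : Bool) (i : Fin (d+1)) (h : i.val < d) :
    (Fin.snoc dir b : Fin (d+1) → Bool) i = dir ⟨i.val, h⟩ := by
  simp [Fin.snoc, h]; rfl

lemma aux_count (d : ℕ) (hd : 2 ≤ d) (k : ℕ)
    (V : Fin d → Fin d → Prop) (W : Fin (d+1) → Fin (d+1) → Prop)
    (hpres : ∀ i j : Fin d, i < j → (W ⟨i.val, by omega⟩ ⟨j.val, by omega⟩ ↔ V i j))
    (hlast : W ⟨d - 1, by omega⟩ (Fin.last d))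
    (hnot : ∀ i : Fin (d+1), (i : ℕ) + 2 ≤ d → ¬ W i (Fin.last d))
    (hk : Nat.card {p : Fin d × Fin d // p.1 < p.2 ∧ V p.1 p.2} = k) :
    Nat.card {p : Fin (d+1) × Fin (d+1) // p.1 < p.2 ∧ W p.1 p.2} = k + 1 := by
  classical
  have hlastlt : (⟨d - 1, by omega⟩ : Fin (d+1)) < Fin.last d := by
    rw [Fin.lt_def]; simp [Fin.last]; omega
  let f : {p : Fin d × Fin d // p.1 < p.2 ∧ V p.1 p.2} ⊕ PUnit.{1} →
      {p : Fin (d+1) × Fin (d+1) // p.1 < p.2 ∧ W p.1 p.2} :=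
    fun q => q.elim
      (fun q => ⟨(⟨q.1.1.val, by omega⟩, ⟨q.1.2.val, by omega⟩),
        q.2.1, (hpres _ _ q.2.1).mpr q.2.2⟩)
      (fun _ => ⟨(⟨d - 1, by omega⟩, Fin.last d), hlastlt, hlast⟩)
  have hfbij : Function.Bijective f := by
    constructor
    · rintro (⟨⟨i1, j1⟩, h1⟩ | ⟨⟩) (⟨⟨i2, j2⟩, h2⟩ | ⟨⟩) heq <;>
        simp only [f, Sum.elim_inl, Sum.elim_inr, Subtype.mk.injEq, Prod.mk.injEq,
          Fin.mk.injEq] at heq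
      · simp only [Sum.inl.injEq, Subtype.mk.injEq, Prod.mk.injEq]
        exact ⟨Fin.ext heq.1, Fin.ext heq.2⟩
      · exfalso
        have : (j1 : ℕ) = d := by
          have := heq.2
          simpa [Fin.last, Fin.ext_iff] using this
        omega
      · exfalso
        have : (j2 : ℕ) = d := by
          have := heq.2
          simpa [Fin.last, Fin.ext_iff] using this.symm
        omega
      · rfl
    · rintro ⟨⟨i, j⟩, hij, hv⟩
      by_cases hjd : (j : ℕ) < d
      · have hid : (i : ℕ) < d := lt_trans hij hjd
        have hijd : (⟨i.val, hid⟩ : Fin d) < ⟨j.val, hjd⟩ := hij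
        refine ⟨Sum.inl ⟨(⟨i.val, hid⟩, ⟨j.val, hjd⟩), hijd, ?_⟩, ?_⟩
        · exact (hpres _ _ hijd).mp hv
        · apply Subtype.ext
          exact Prod.ext (Fin.ext rfl) (Fin.ext rfl)
      · have hj' : j = Fin.last d := Fin.ext (by have := j.isLt; simp [Fin.last]; omega)
        subst hj'
        have hi : (i : ℕ) < d := hij
        have hi1 : ¬ ((i : ℕ) + 2 ≤ d) := fun h => hnot i h hv
        have hieq : (i : ℕ) = d - 1 := by omega
        refine ⟨Sum.inr PUnit.unit, ?_⟩
        apply Subtype.ext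
        refine Prod.ext (Fin.ext ?_) rfl
        simp [f, hieq]
  calc Nat.card {p : Fin (d+1) × Fin (d+1) // p.1 < p.2 ∧ W p.1 p.2}
      = Nat.card ({p : Fin d × Fin d // p.1 < p.2 ∧ V p.1 p.2} ⊕ PUnit.{1}) :=
        (Nat.card_congr (Equiv.ofBijective f hfbij)).symm
    _ = Nat.card {p : Fin d × Fin d // p.1 < p.2 ∧ V p.1 p.2} + Nat.card PUnit.{1} :=
        Nat.card_sum
    _ = k + 1 := by rw [hk]; simp

set_option maxHeartbeats 1000000 in
theorem stmt5 (d : ℕ) (hd : 2 ≤ d) (k : ℕ) (z : Fin d → ℂ) (dir : Fin d → Bool)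
    (hre : StrictMono fun i => (z i).re)
    (him : Function.Injective fun i => (z i).im)
    (hk : Nat.card {p : Fin d × Fin d // p.1 < p.2 ∧ Visible d z dir p.1 p.2} = k) :
    ∃ (w : ℂ) (b : Bool),
      (z ⟨d - 1, by omega⟩).re < w.re ∧
      StrictMono (fun i => ((Fin.snoc z w : Fin (d + 1) → ℂ) i).re) ∧
      Function.Injective (fun i => ((Fin.snoc z w : Fin (d + 1) → ℂ) i).im) ∧
      (∀ i : Fin (d + 1), (i : ℕ) + 2 ≤ d →
        ¬ Visible (d + 1) (Fin.snoc z w) (Fin.snoc dir b) i (Fin.last d)) ∧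
      Visible (d + 1) (Fin.snoc z w) (Fin.snoc dir b) ⟨d - 1, by omega⟩ (Fin.last d) ∧
      Nat.card {p : Fin (d + 1) × Fin (d + 1) //
          p.1 < p.2 ∧ Visible (d + 1) (Fin.snoc z w) (Fin.snoc dir b) p.1 p.2} =
        k + 1 := by
  classical
  set d1 : Fin d := ⟨d - 1, by omega⟩ with hd1
  set x : ℝ := (z d1).re with hx
  set y : ℝ := (z d1).im with hy
  set b' : Bool := dir d1 with hb'
  set s : ℝ := (if b' then 1 else -1 : ℝ) with hs
  set t : Fin d → ℝ := fun i => (x - (z i).re) / (x + 1 - (z i).re) with htdef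
  set T : ℝ := 1 + ∑ i : Fin d, (|(1 - t i) * ((z i).im - y)| / t i + |(z i).im - y|) with hT
  set c : ℝ := y + s * T with hc
  set w : ℂ := ⟨x + 1, c⟩ with hw
  have hwre : w.re = x + 1 := rfl
  have hwim : w.im = c := rfl
  have hss : s * s = 1 := by rcases b' <;> simp [hs]
  have hsabs : |s| = 1 := by rcases b' <;> simp [hs]
  have hrele : ∀ i : Fin d, (z i).re ≤ x := by
    intro i
    exact hre.monotone (show i ≤ d1 from by
      rw [Fin.le_def]; simp [hd1]; omega)
  have hrelt : ∀ i : Fin d, (i : ℕ) < d - 1 → (z i).re < x := by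
    intro i hi
    exact hre (show i < d1 from by rw [Fin.lt_def]; simpa [hd1])
  have hden : ∀ i : Fin d, (0:ℝ) < x + 1 - (z i).re := by
    intro i; have := hrele i; linarith
  have ht0 : ∀ i : Fin d, 0 ≤ t i := by
    intro i; have := hrele i
    exact div_nonneg (by linarith) (le_of_lt (hden i))
  have ht1 : ∀ i : Fin d, t i < 1 := by
    intro i
    rw [htdef]
    exact (div_lt_one (hden i)).mpr (by linarith)
  have htpos : ∀ i : Fin d, (i : ℕ) < d - 1 → 0 < t i := by
    intro i hi
    have := hrelt i hi
    exact div_pos (by linarith) (hden i)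
  have hterm_nonneg : ∀ i : Fin d,
      0 ≤ |(1 - t i) * ((z i).im - y)| / t i + |(z i).im - y| :=
    fun i => add_nonneg (div_nonneg (abs_nonneg _) (ht0 i)) (abs_nonneg _)
  have hTterm : ∀ i : Fin d,
      |(1 - t i) * ((z i).im - y)| / t i + |(z i).im - y| ≤ T - 1 := by
    intro i
    have := Finset.single_le_sum (f := fun i : Fin d =>
      |(1 - t i) * ((z i).im - y)| / t i + |(z i).im - y|)
      (fun i _ => hterm_nonneg i) (Finset.mem_univ i)
    rw [hT]; linarith
  have hT1 : 1 ≤ T := by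
    have : 0 ≤ ∑ i : Fin d, (|(1 - t i) * ((z i).im - y)| / t i + |(z i).im - y|) :=
      Finset.sum_nonneg fun i _ => hterm_nonneg i
    rw [hT]; linarith
  have himne : ∀ i : Fin d, (z i).im ≠ c := by
    intro i hic
    have h1 : |(z i).im - y| ≤ T - 1 :=
      le_trans (le_add_of_nonneg_left (div_nonneg (abs_nonneg _) (ht0 i))) (hTterm i)
    have h2 : |c - y| = T := by
      rw [hc]; simp [abs_mul, hsabs]
      linarith
    rw [hic] at h1
    rw [h2] at h1
    linarith
  have hZ : ∀ (i : Fin (d+1)) (h : i.val < d),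
      (Fin.snoc z w : Fin (d+1) → ℂ) i = z ⟨i.val, h⟩ := aux_snoc_lt z w
  have hZlast : (Fin.snoc z w : Fin (d+1) → ℂ) (Fin.last d) = w := by simp
  have hD : ∀ (i : Fin (d+1)) (h : i.val < d),
      (Fin.snoc dir b' : Fin (d+1) → Bool) i = dir ⟨i.val, h⟩ := aux_snoc_lt' dir b'
  have hZ' : ∀ i : Fin d,
      (Fin.snoc z w : Fin (d+1) → ℂ) ⟨i.val, by omega⟩ = z i :=
    fun i => aux_snoc_lt z w ⟨i.val, by omega⟩ i.isLt
  have hD' : ∀ i : Fin d,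
      (Fin.snoc dir b' : Fin (d+1) → Bool) ⟨i.val, by omega⟩ = dir i :=
    fun i => aux_snoc_lt' dir b' ⟨i.val, by omega⟩ i.isLt
  -- Goal 1
  have goal1 : (z d1).re < w.re := by rw [hwre]; linarith
  -- Goal 2: StrictMono
  have goal2 : StrictMono (fun i => ((Fin.snoc z w : Fin (d + 1) → ℂ) i).re) := by
    intro i j hij
    simp only []
    by_cases hj : (j : ℕ) < d
    · have hi : (i : ℕ) < d := lt_trans hij hj
      rw [hZ i hi, hZ j hj]
      exact hre (show (⟨i.val, hi⟩ : Fin d) < ⟨j.val, hj⟩ from hij)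
    · have hj' : j = Fin.last d := Fin.ext (by have := j.isLt; simp [Fin.last]; omega)
      subst hj'
      have hi : (i : ℕ) < d := hij
      rw [hZ i hi, hZlast, hwre]
      have := hrele ⟨i.val, hi⟩
      linarith
  -- Goal 3: injective im
  have goal3 : Function.Injective (fun i => ((Fin.snoc z w : Fin (d + 1) → ℂ) i).im) := by
    intro i j hij
    simp only [] at hij
    by_cases hi : (i : ℕ) < d <;> by_cases hj : (j : ℕ) < d
    · rw [hZ i hi, hZ j hj] at hij
      have h5 := him hij
      simp only [Fin.mk.injEq] at h5
      exact Fin.ext h5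
    · have hj' : j = Fin.last d := Fin.ext (by have := j.isLt; simp [Fin.last]; omega)
      subst hj'
      rw [hZ i hi, hZlast, hwim] at hij
      exact absurd hij (himne ⟨i.val, hi⟩)
    · have hi' : i = Fin.last d := Fin.ext (by have := i.isLt; simp [Fin.last]; omega)
      subst hi'
      rw [hZ j hj, hZlast, hwim] at hij
      exact absurd hij.symm (himne ⟨j.val, hj⟩)
    · have hi' : i = Fin.last d := Fin.ext (by have := i.isLt; simp [Fin.last]; omega)
      have hj' : j = Fin.last d := Fin.ext (by have := j.isLt; simp [Fin.last]; omega)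
      rw [hi', hj']
  -- Goal 4: non-visibility
  have goal4 : ∀ i : Fin (d + 1), (i : ℕ) + 2 ≤ d →
      ¬ Visible (d + 1) (Fin.snoc z w) (Fin.snoc dir b') i (Fin.last d) := by
    intro i hi2 hvis
    rw [aux_visible_iff] at hvis
    have hilt : (i : ℕ) < d := by omega
    have hilt1 : (i : ℕ) < d - 1 := by omega
    set i' : Fin d := ⟨i.val, hilt⟩ with hi'
    set ti : ℝ := t i' with hti
    set a : ℝ := (z i').re with ha
    have htipos : 0 < ti := htpos i' hilt1
    have hti1 : ti < 1 := ht1 i'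
    set p : ℂ := ⟨x, (1 - ti) * (z i').im + ti * c⟩ with hp
    have hpim : p.im = (1 - ti) * (z i').im + ti * c := rfl
    have hpre : p.re = x := rfl
    have hpeq : (1 - ti) • (z i') + ti • w = p := by
      apply Complex.ext
      · have hmul : ti * (x + 1 - a) = x - a := div_mul_cancel₀ _ (ne_of_gt (hden i'))
        simp only [Complex.add_re, Complex.real_smul, Complex.mul_re, Complex.ofReal_re,
          Complex.ofReal_im, hwre, hpre]
        ring_nf
        ring_nf at hmul
        linarith
      · simp only [Complex.add_im, Complex.real_smul, Complex.mul_im, Complex.ofReal_re,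
          Complex.ofReal_im, hwim, hpim]
        ring
    have hpseg : p ∈ openSegment ℝ ((Fin.snoc z w : Fin (d+1) → ℂ) i)
        ((Fin.snoc z w : Fin (d+1) → ℂ) (Fin.last d)) := by
      rw [hZ i hilt, hZlast, ← hpeq]
      exact aux_mem_seg htipos hti1
    apply hvis p hpseg
    rw [aux_mem_cutSet_iff]
    refine ⟨⟨d - 1, by omega⟩, by simp; omega, by simp; omega, ?_⟩
    rw [hZ _ (show d - 1 < d by omega), hD _ (show d - 1 < d by omega)]
    have hzd1 : z ⟨d - 1, show d - 1 < d by omega⟩ = z d1 := rfl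
    have hdd1 : dir ⟨d - 1, show d - 1 < d by omega⟩ = dir d1 := rfl
    rw [hzd1, hdd1]
    set A : ℝ := (1 - ti) * ((z i').im - y) with hA
    have hpimy : p.im - y = A + ti * (s * T) := by
      rw [hpim, hc, hA]; ring
    set τ : ℝ := s * (p.im - y) with hτ
    have hτval : τ = s * A + ti * T := by
      rw [hτ, hpimy]
      have : s * (A + ti * (s * T)) = s * A + ti * (s * s) * T := by ring
      rw [this, hss]; ring
    have hAbound : |A| < ti * T := by
      have h1 : |A| / ti ≤ T - 1 :=
        le_trans (le_add_of_nonneg_right (abs_nonneg _)) (hTterm i')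
      have h2 : |A| ≤ (T - 1) * ti := (div_le_iff₀ htipos).mp h1
      have h3 : (T - 1) * ti < T * ti :=
        mul_lt_mul_of_pos_right (by linarith) htipos
      have h4 : T * ti = ti * T := mul_comm _ _
      linarith
    have hsA : -|A| ≤ s * A := by
      have : |s * A| = |A| := by rw [abs_mul, hsabs, one_mul]
      have h3 := neg_abs_le (s * A)
      rw [this] at h3
      exact h3
    have hτpos : 0 < τ := by rw [hτval]; linarith
    refine ⟨τ, hτpos, ?_⟩
    have hkey : (if b' = true then (τ:ℂ) else -(τ:ℂ)) = ((s * τ : ℝ) : ℂ) := by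
      rcases b' <;> simp [hs] <;> push_cast <;> ring
    have hsτ : s * τ = p.im - y := by
      rw [hτ, ← mul_assoc, hss, one_mul]
    rw [← hb', hkey]
    apply Complex.ext
    · simp [hpre, hkey, hx]
    · simp [hkey, hsτ, hy]
  -- Goal 5: visibility of the last pair
  have goal5 : Visible (d + 1) (Fin.snoc z w) (Fin.snoc dir b') ⟨d - 1, by omega⟩
      (Fin.last d) := by
    rw [aux_visible_iff]
    intro p hp hcut
    rw [hZ _ (show d - 1 < d by omega), hZlast] at hp
    have hzd1 : z ⟨d - 1, show d - 1 < d by omega⟩ = z d1 := rfl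
    rw [hzd1] at hp
    obtain ⟨t0, ht0', ht1', hpre, _⟩ := aux_seg_coord hp
    have hpx : x < p.re := by rw [hpre, hwre]; nlinarith
    obtain ⟨j, hj0, hjd, hray⟩ := aux_mem_cutSet_iff.mp hcut
    have hjlt : (j : ℕ) < d := by have := j.isLt; omega
    rw [hZ j hjlt] at hray
    have := aux_cutRay_re hray
    have := hrele ⟨j.val, hjlt⟩
    linarith
  -- counting
  have hsegre : ∀ (i j : Fin d), i < j → ∀ p ∈ openSegment ℝ (z i) (z j), p.re < x := by
    intro i j hij p hp
    obtain ⟨t0, ht0', ht1', hpre, _⟩ := aux_seg_coord hp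
    have h1 : (z i).re < (z j).re := hre hij
    have h2 : (z j).re ≤ x := hrele j
    nlinarith
  have hcutEquiv : ∀ p : ℂ, p.re < x →
      (p ∈ cutSet (d+1) (Fin.snoc z w) (Fin.snoc dir b') ↔ p ∈ cutSet d z dir) := by
    intro p hpx
    rw [aux_mem_cutSet_iff, aux_mem_cutSet_iff]
    constructor
    · rintro ⟨j, hj0, hjd, hray⟩
      have hjlt : (j : ℕ) < d := by have := j.isLt; omega
      rw [hZ j hjlt, hD j hjlt] at hray
      by_cases hjd1 : (j : ℕ) = d - 1
      · exfalso
        have h1 := aux_cutRay_re hray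
        have h2 : (⟨j.val, hjlt⟩ : Fin d) = d1 := Fin.ext (by simp [hd1]; omega)
        rw [h2] at h1
        linarith
      · exact ⟨⟨j.val, hjlt⟩, hj0, by simpa, hray⟩
    · rintro ⟨j, hj0, hjd1, hray⟩
      refine ⟨⟨j.val, by omega⟩, by simpa, by simp; omega, ?_⟩
      rw [hZ _ (show j.val < d from j.isLt), hD _ (show j.val < d from j.isLt)]
      exact hray
  have hpres : ∀ i j : Fin d, i < j →
      (Visible (d+1) (Fin.snoc z w) (Fin.snoc dir b') ⟨i.val, by omega⟩ ⟨j.val, by omega⟩ ↔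
        Visible d z dir i j) := by
    intro i j hij
    rw [aux_visible_iff, aux_visible_iff, hZ' i, hZ' j]
    constructor
    · intro h p hp hpc
      exact h p hp ((hcutEquiv p (hsegre i j hij p hp)).mpr hpc)
    · intro h p hp hpc
      exact h p hp ((hcutEquiv p (hsegre i j hij p hp)).mp hpc)
  have goal6 : Nat.card {p : Fin (d + 1) × Fin (d + 1) //
      p.1 < p.2 ∧ Visible (d + 1) (Fin.snoc z w) (Fin.snoc dir b') p.1 p.2} = k + 1 :=
    aux_count d hd k (Visible d z dir)
      (Visible (d + 1) (Fin.snoc z w) (Fin.snoc dir b')) hpres goal5 goal4 hk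
  exact ⟨w, b', goal1, goal2, goal3, goal4, goal5, goal6⟩
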